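/- Let f : [0,∞) → [0,∞) be a convex, strictly monotonically increasing function with f(0) = 0 that maps [0,∞) onto [0,∞) (so that its inverse exists and is non-negative, increasing and concave). Let A and B be n×n positive semidefinite complex matrices such that A − ‖B‖·I is positive semidefinite. Then for every index k, λ_k↓(f(A − B)) ≤ λ_k↓(f(A) − f(B)). -/

import Mathlib

open Matrix
open scoped ComplexOrder

/-- The eigenvalues of a square matrix, sorted in non-increasing order
(junk value `0` if the matrix is not Hermitian). -/
noncomputable def eigValsDown {𝕜 : Type*} [RCLike 𝕜] {n : ℕ}
    (A : Matrix (Fin n) (Fin n) 𝕜) : Fin n → ℝ :=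
  if hA : A.IsHermitian then
    fun k => (hA.eigenvalues ∘ Tuple.sort hA.eigenvalues) k.rev
  else 0

/-- Functional calculus: apply a real function to a Hermitian matrix via its spectral
decomposition (junk value `0` if the matrix is not Hermitian). -/
noncomputable def matFun {𝕜 : Type*} [RCLike 𝕜] {n : ℕ} (h : ℝ → ℝ)
    (A : Matrix (Fin n) (Fin n) 𝕜) : Matrix (Fin n) (Fin n) 𝕜 :=
  if hA : A.IsHermitian then
    (hA.eigenvectorUnitary : Matrix (Fin n) (Fin n) 𝕜) *
      Matrix.diagonal (fun i => (h (hA.eigenvalues i) : 𝕜)) *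
      star (hA.eigenvectorUnitary : Matrix (Fin n) (Fin n) 𝕜)
  else 0

/-- The operator norm (largest singular value) of a matrix. -/
noncomputable def opNorm {𝕜 : Type*} [RCLike 𝕜] {n : ℕ}
    (A : Matrix (Fin n) (Fin n) 𝕜) : ℝ :=
  ‖Matrix.toEuclideanCLM (𝕜 := 𝕜) A‖

/-- The matrix absolute value `|M| = (Mᴴ M)^(1/2)`. -/
noncomputable def matAbs {𝕜 : Type*} [RCLike 𝕜] {n : ℕ}
    (A : Matrix (Fin n) (Fin n) 𝕜) : Matrix (Fin n) (Fin n) 𝕜 :=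
  (Matrix.posSemidef_conjTranspose_mul_self A).1.eigenvectorUnitary.1 *
    Matrix.diagonal ((↑) ∘ (Real.sqrt ·) ∘ (Matrix.posSemidef_conjTranspose_mul_self A).1.eigenvalues) *
    (star (Matrix.posSemidef_conjTranspose_mul_self A).1.eigenvectorUnitary : Matrix (Fin n) (Fin n) 𝕜)

/-- The Ky Fan `k`-norm: the sum of the `k` largest singular values. -/
noncomputable def kyFanNorm {𝕜 : Type*} [RCLike 𝕜] {n : ℕ} (k : ℕ)
    (A : Matrix (Fin n) (Fin n) 𝕜) : ℝ :=
  ∑ j ∈ Finset.univ.filter (fun j : Fin n => (j : ℕ) < k), eigValsDown (matAbs A) j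

section AuxStmt1
open Polynomial
variable {n : ℕ}


lemma charpoly_unitary_conj (U : Matrix.unitaryGroup (Fin n) ℂ)
    (D : Matrix (Fin n) (Fin n) ℂ) :
    ((U : Matrix (Fin n) (Fin n) ℂ) * D * star (U : Matrix (Fin n) (Fin n) ℂ)).charpoly
      = D.charpoly := by
  have hU : (U : Matrix (Fin n) (Fin n) ℂ) * star (U : Matrix (Fin n) (Fin n) ℂ) = 1 :=
    Unitary.coe_mul_star_self U
  have hU' : star (U : Matrix (Fin n) (Fin n) ℂ) * (U : Matrix (Fin n) (Fin n) ℂ) = 1 :=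
    Unitary.coe_star_mul_self U
  set Uc := (C : ℂ →+* ℂ[X]).mapMatrix (U : Matrix (Fin n) (Fin n) ℂ) with hUc
  set Vc := (C : ℂ →+* ℂ[X]).mapMatrix (star (U : Matrix (Fin n) (Fin n) ℂ)) with hVc
  have hUV : Uc * Vc = 1 := by rw [hUc, hVc, ← _root_.map_mul, hU, _root_.map_one]
  have hcm : charmatrix ((U : Matrix (Fin n) (Fin n) ℂ) * D * star (U : Matrix (Fin n) (Fin n) ℂ))
      = Uc * charmatrix D * Vc := by
    rw [charmatrix, charmatrix, Matrix.mul_sub, Matrix.sub_mul]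
    congr 1
    · have hc : Commute (scalar (Fin n) (X : ℂ[X])) Vc :=
        scalar_commute _ (fun r' => Commute.all _ _) _
      rw [mul_assoc, hc.eq, ← mul_assoc, hUV, one_mul]
    · rw [_root_.map_mul, _root_.map_mul, mul_assoc]
  rw [Matrix.charpoly, hcm, Matrix.charpoly, det_mul, det_mul]
  have h1 : Uc.det * Vc.det = 1 := by rw [← det_mul, hUV, det_one]
  calc Uc.det * (charmatrix D).det * Vc.det
      = Uc.det * Vc.det * (charmatrix D).det := by ring
    _ = (charmatrix D).det := by rw [h1, one_mul]

lemma charpoly_diagonal_c (d : Fin n → ℂ) :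
    (Matrix.diagonal d).charpoly = ∏ i : Fin n, (X - C (d i)) := by
  rw [Matrix.charpoly_of_upperTriangular _ (Matrix.blockTriangular_diagonal d)]
  simp [Matrix.diagonal_apply_eq]

/-- any unitary diagonalization has the same eigenvalue multiset as the canonical one -/
lemma eig_multiset_of_conj {H : Matrix (Fin n) (Fin n) ℂ} (hH : H.IsHermitian)
    (U : Matrix.unitaryGroup (Fin n) ℂ) (d : Fin n → ℝ)
    (hdecomp : H = (U : Matrix (Fin n) (Fin n) ℂ) * Matrix.diagonal (fun i => (d i : ℂ)) *
      star (U : Matrix (Fin n) (Fin n) ℂ)) :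
    Finset.univ.val.map d = Finset.univ.val.map hH.eigenvalues := by
  have h1 : H.charpoly = ∏ i : Fin n, (X - C ((d i : ℂ))) := by
    rw [hdecomp, charpoly_unitary_conj, charpoly_diagonal_c]
  have h2 : H.charpoly = ∏ i : Fin n, (X - C ((hH.eigenvalues i : ℂ))) := by
    conv_lhs => rw [hH.spectral_theorem, Unitary.conjStarAlgAut_apply]
    rw [charpoly_unitary_conj, charpoly_diagonal_c]
    rfl
  have h3 : (Finset.univ.val.map (fun i => (d i : ℂ)))
      = (Finset.univ.val.map (fun i => (hH.eigenvalues i : ℂ))) := by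
    have r1 := Polynomial.roots_multiset_prod_X_sub_C
      (Finset.univ.val.map (fun i => (d i : ℂ)))
    have r2 := Polynomial.roots_multiset_prod_X_sub_C
      (Finset.univ.val.map (fun i => (hH.eigenvalues i : ℂ)))
    rw [Multiset.map_map] at r1 r2
    have : ((Finset.univ.val.map fun i => X - C ((d i : ℂ)))).prod
        = ((Finset.univ.val.map fun i => X - C ((hH.eigenvalues i : ℂ)))).prod := by
      rw [← Finset.prod_eq_multiset_prod, ← Finset.prod_eq_multiset_prod, ← h1, ← h2]
    rw [← r1, ← r2]
    simp only [Function.comp] at this ⊢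
    rw [this]
  have := congrArg (Multiset.map Complex.re) h3
  simpa [Multiset.map_map, Function.comp_def] using this



lemma eigValsDown_eq {H : Matrix (Fin n) (Fin n) ℂ} (hH : H.IsHermitian) :
    eigValsDown H = fun k => hH.eigenvalues (Tuple.sort hH.eigenvalues k.rev) := by
  rw [eigValsDown, dif_pos hH]; rfl

lemma eigValsDown_antitone {H : Matrix (Fin n) (Fin n) ℂ} (hH : H.IsHermitian) :
    Antitone (eigValsDown H) := by
  rw [eigValsDown_eq hH]
  intro i j hij
  exact Tuple.monotone_sort hH.eigenvalues (Fin.rev_le_rev.mpr hij)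

lemma multiset_map_perm {α : Type*} (g : Fin n → α) (σ : Equiv.Perm (Fin n)) :
    Finset.univ.val.map (g ∘ σ) = Finset.univ.val.map g := by
  have h : Finset.univ.val.map (fun i => σ i) = Finset.univ.val := by
    have := Finset.map_univ_equiv σ
    calc Finset.univ.val.map (fun i => σ i)
        = (Finset.univ.map σ.toEmbedding).val := rfl
      _ = Finset.univ.val := by rw [Finset.map_univ_equiv]
  calc Finset.univ.val.map (g ∘ σ)
      = (Finset.univ.val.map (fun i => σ i)).map g := by
        rw [Multiset.map_map]
    _ = Finset.univ.val.map g := by rw [h]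

lemma eigValsDown_multiset {H : Matrix (Fin n) (Fin n) ℂ} (hH : H.IsHermitian) :
    Finset.univ.val.map (eigValsDown H) = Finset.univ.val.map hH.eigenvalues := by
  rw [eigValsDown_eq hH]
  have : (fun k : Fin n => hH.eigenvalues (Tuple.sort hH.eigenvalues k.rev))
      = hH.eigenvalues ∘ (Fin.revPerm.trans (Tuple.sort hH.eigenvalues)) := rfl
  rw [this, multiset_map_perm]

/-- two antitone tuples with the same multiset of values coincide -/
lemma antitone_unique {a b : Fin n → ℝ} (ha : Antitone a) (hb : Antitone b)
    (h : Finset.univ.val.map a = Finset.univ.val.map b) : a = b := by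
  have key : ∀ (c : Fin n → ℝ), Finset.univ.val.map c = ↑(List.ofFn (c ∘ Fin.rev)) := by
    intro c
    have h1 : Finset.univ.val.map c = Finset.univ.val.map (c ∘ Fin.revPerm) :=
      (multiset_map_perm c Fin.revPerm).symm
    rw [h1]
    have h2 : (Finset.univ : Finset (Fin n)).val = ↑(List.finRange n) := by
      rfl
    rw [h2]
    rw [List.ofFn_eq_map, ← Multiset.map_coe]
    rfl
  have hperm : List.Perm (List.ofFn (a ∘ Fin.rev)) (List.ofFn (b ∘ Fin.rev)) := by
    rw [← Multiset.coe_eq_coe, ← key, ← key, h]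
  have hsa : (List.ofFn (a ∘ Fin.rev)).Pairwise (· ≤ ·) := by
    rw [List.pairwise_ofFn]
    intro i j hij
    exact ha (Fin.rev_le_rev.mpr hij.le)
  have hsb : (List.ofFn (b ∘ Fin.rev)).Pairwise (· ≤ ·) := by
    rw [List.pairwise_ofFn]
    intro i j hij
    exact hb (Fin.rev_le_rev.mpr hij.le)
  have := List.Perm.eq_of_pairwise' hsa hsb hperm
  have h3 : a ∘ Fin.rev = b ∘ Fin.rev := List.ofFn_injective this
  funext i
  have := congrFun h3 i.rev
  simpa [Function.comp, Fin.rev_rev] using this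



lemma matFun_eq {H : Matrix (Fin n) (Fin n) ℂ} (hH : H.IsHermitian) (f : ℝ → ℝ) :
    matFun f H = (hH.eigenvectorUnitary : Matrix (Fin n) (Fin n) ℂ) *
      Matrix.diagonal (fun i => (f (hH.eigenvalues i) : ℂ)) *
      star (hH.eigenvectorUnitary : Matrix (Fin n) (Fin n) ℂ) := by
  rw [matFun, dif_pos hH]
  rfl


lemma matFun_isHermitian {H : Matrix (Fin n) (Fin n) ℂ} (hH : H.IsHermitian) (f : ℝ → ℝ) :
    (matFun f H).IsHermitian := by
  rw [matFun_eq hH f]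
  have hd : (Matrix.diagonal (fun i => (f (hH.eigenvalues i) : ℂ))).IsHermitian := by
    rw [Matrix.isHermitian_diagonal_iff]
    intro i
    exact Complex.conj_ofReal _
  have := Matrix.isHermitian_mul_mul_conjTranspose
    (hH.eigenvectorUnitary : Matrix (Fin n) (Fin n) ℂ) hd
  rwa [Matrix.star_eq_conjTranspose]


/-- span of standard basis vectors indexed by `s` -/
noncomputable def stdSub (n : ℕ) (s : Finset (Fin n)) : Submodule ℂ (Fin n → ℂ) :=
  Submodule.span ℂ (⇑(Pi.basisFun ℂ (Fin n)) '' ↑s)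

lemma mem_stdSub_iff {s : Finset (Fin n)} {x : Fin n → ℂ} :
    x ∈ stdSub n s ↔ ∀ j ∉ s, x j = 0 := by
  rw [stdSub, Module.Basis.mem_span_image]
  constructor
  · intro h j hj
    by_contra hx
    exact hj (h (by simpa [Finsupp.mem_support_iff, Pi.basisFun_repr] using hx))
  · intro h j hj
    simp only [Finset.mem_coe, Finsupp.mem_support_iff, Pi.basisFun_repr] at hj
    by_contra hjs
    exact hj (h j hjs)

lemma finrank_stdSub (s : Finset (Fin n)) :
    Module.finrank ℂ (stdSub n s) = s.card := by
  classical
  have hli : LinearIndependent ℂ (fun i : ↥(s : Set (Fin n)) =>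
      (Pi.basisFun ℂ (Fin n)) (i : Fin n)) :=
    (Pi.basisFun ℂ (Fin n)).linearIndependent.comp _ Subtype.val_injective
  have hr : Set.range (fun i : ↥(s : Set (Fin n)) =>
      (Pi.basisFun ℂ (Fin n)) (i : Fin n)) = ⇑(Pi.basisFun ℂ (Fin n)) '' ↑s := by
    rw [Set.image_eq_range]
  rw [stdSub, ← hr, finrank_span_eq_card hli]
  simp

/-- the linear equivalence given by multiplication with a unitary matrix -/
noncomputable def unitaryEquiv (U : Matrix.unitaryGroup (Fin n) ℂ) :
    (Fin n → ℂ) ≃ₗ[ℂ] (Fin n → ℂ) :=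
  LinearEquiv.ofLinear
    (Matrix.mulVecLin (U : Matrix (Fin n) (Fin n) ℂ))
    (Matrix.mulVecLin (star (U : Matrix (Fin n) (Fin n) ℂ)))
    (by rw [← Matrix.mulVecLin_mul,
          show ((U : Matrix (Fin n) (Fin n) ℂ) * star (U : Matrix (Fin n) (Fin n) ℂ)) = 1 from
            Unitary.coe_mul_star_self U, Matrix.mulVecLin_one])
    (by rw [← Matrix.mulVecLin_mul,
          show (star (U : Matrix (Fin n) (Fin n) ℂ) * (U : Matrix (Fin n) (Fin n) ℂ)) = 1 from
            Unitary.coe_star_mul_self U, Matrix.mulVecLin_one])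

/-- image of the coordinate subspace `stdSub s` under a Hermitian matrix's eigenbasis -/
noncomputable def eigSub {H : Matrix (Fin n) (Fin n) ℂ} (hH : H.IsHermitian)
    (s : Finset (Fin n)) : Submodule ℂ (Fin n → ℂ) :=
  (stdSub n s).map (unitaryEquiv hH.eigenvectorUnitary : (Fin n → ℂ) →ₗ[ℂ] (Fin n → ℂ))

lemma finrank_eigSub {H : Matrix (Fin n) (Fin n) ℂ} (hH : H.IsHermitian)
    (s : Finset (Fin n)) : Module.finrank ℂ (eigSub hH s) = s.card := by
  rw [eigSub, LinearEquiv.finrank_map_eq, finrank_stdSub]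

lemma eigSub_coord {H : Matrix (Fin n) (Fin n) ℂ} (hH : H.IsHermitian)
    {s : Finset (Fin n)} {x : Fin n → ℂ} (hx : x ∈ eigSub hH s) :
    ∀ j ∉ s, (star (hH.eigenvectorUnitary : Matrix (Fin n) (Fin n) ℂ) *ᵥ x) j = 0 := by
  obtain ⟨y, hy, rfl⟩ := hx
  have : star (hH.eigenvectorUnitary : Matrix (Fin n) (Fin n) ℂ) *ᵥ
      ((unitaryEquiv hH.eigenvectorUnitary : (Fin n → ℂ) →ₗ[ℂ] (Fin n → ℂ)) y) = y := by
    show star (hH.eigenvectorUnitary : Matrix (Fin n) (Fin n) ℂ) *ᵥ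
      ((hH.eigenvectorUnitary : Matrix (Fin n) (Fin n) ℂ) *ᵥ y) = y
    rw [Matrix.mulVec_mulVec, Unitary.coe_star_mul_self, Matrix.one_mulVec]
  rw [this]
  exact fun j hj => mem_stdSub_iff.mp hy j hj

/-- central quadratic form computation -/
lemma qform_conj_diag (U : Matrix.unitaryGroup (Fin n) ℂ) (d : Fin n → ℝ) (x : Fin n → ℂ) :
    star x ⬝ᵥ (((U : Matrix (Fin n) (Fin n) ℂ) * Matrix.diagonal (fun i => (d i : ℂ)) *
      star (U : Matrix (Fin n) (Fin n) ℂ)) *ᵥ x)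
    = ((∑ i, d i * Complex.normSq ((star (U : Matrix (Fin n) (Fin n) ℂ) *ᵥ x) i) : ℝ) : ℂ) := by
  set y := star (U : Matrix (Fin n) (Fin n) ℂ) *ᵥ x with hy
  have h1 : ((U : Matrix (Fin n) (Fin n) ℂ) * Matrix.diagonal (fun i => (d i : ℂ)) *
      star (U : Matrix (Fin n) (Fin n) ℂ)) *ᵥ x
      = (U : Matrix (Fin n) (Fin n) ℂ) *ᵥ (Matrix.diagonal (fun i => (d i : ℂ)) *ᵥ y) := by
    rw [Matrix.mulVec_mulVec, Matrix.mulVec_mulVec]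
  have h2 : star x ᵥ* (U : Matrix (Fin n) (Fin n) ℂ) = star y := by
    rw [hy, Matrix.star_mulVec, Matrix.star_eq_conjTranspose, Matrix.conjTranspose_conjTranspose]
  rw [h1, Matrix.dotProduct_mulVec, h2, dotProduct]
  push_cast
  congr 1
  funext i
  simp only [Pi.star_apply, Matrix.mulVec_diagonal]
  rw [Complex.normSq_eq_conj_mul_self]
  simp only [Complex.star_def]
  ring

lemma sum_normSq_mulVec (U : Matrix.unitaryGroup (Fin n) ℂ) (x : Fin n → ℂ) :
    ∑ i, Complex.normSq (((U : Matrix (Fin n) (Fin n) ℂ) *ᵥ x) i)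
      = ∑ i, Complex.normSq (x i) := by
  have key : ∀ z : Fin n → ℂ, star z ⬝ᵥ z = ((∑ i, Complex.normSq (z i) : ℝ) : ℂ) := by
    intro z
    rw [dotProduct]
    push_cast
    congr 1
    funext i
    rw [Pi.star_apply, Complex.normSq_eq_conj_mul_self, Complex.star_def]
  have h1 : star ((U : Matrix (Fin n) (Fin n) ℂ) *ᵥ x) ⬝ᵥ ((U : Matrix (Fin n) (Fin n) ℂ) *ᵥ x)
      = star x ⬝ᵥ x := by
    rw [Matrix.star_mulVec, Matrix.dotProduct_mulVec, Matrix.vecMul_vecMul]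
    rw [← Matrix.star_eq_conjTranspose, Unitary.coe_star_mul_self, Matrix.vecMul_one]
  have := (key ((U : Matrix (Fin n) (Fin n) ℂ) *ᵥ x)).symm.trans (h1.trans (key x))
  exact_mod_cast congrArg Complex.re this

lemma qform_hermitian {H : Matrix (Fin n) (Fin n) ℂ} (hH : H.IsHermitian) (x : Fin n → ℂ) :
    star x ⬝ᵥ (H *ᵥ x) = ((∑ i, hH.eigenvalues i *
      Complex.normSq ((star (hH.eigenvectorUnitary : Matrix (Fin n) (Fin n) ℂ) *ᵥ x) i) : ℝ) : ℂ) := by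
  conv_lhs => rw [hH.spectral_theorem]
  exact qform_conj_diag hH.eigenvectorUnitary hH.eigenvalues x

lemma qform_matFun {H : Matrix (Fin n) (Fin n) ℂ} (hH : H.IsHermitian) (f : ℝ → ℝ) (x : Fin n → ℂ) :
    star x ⬝ᵥ (matFun f H *ᵥ x) = ((∑ i, f (hH.eigenvalues i) *
      Complex.normSq ((star (hH.eigenvectorUnitary : Matrix (Fin n) (Fin n) ℂ) *ᵥ x) i) : ℝ) : ℂ) := by
  rw [matFun_eq hH f]
  exact qform_conj_diag hH.eigenvectorUnitary (fun i => f (hH.eigenvalues i)) x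

lemma sum_normSq_star_mulVec (U : Matrix.unitaryGroup (Fin n) ℂ) (x : Fin n → ℂ) :
    ∑ i, Complex.normSq ((star (U : Matrix (Fin n) (Fin n) ℂ) *ᵥ x) i)
      = ∑ i, Complex.normSq (x i) := by
  have hmem : star (U : Matrix (Fin n) (Fin n) ℂ) ∈ Matrix.unitaryGroup (Fin n) ℂ :=
    Unitary.star_mem U.2
  exact sum_normSq_mulVec ⟨star (U : Matrix (Fin n) (Fin n) ℂ), hmem⟩ x

lemma qform_bound_lower {H : Matrix (Fin n) (Fin n) ℂ} (hH : H.IsHermitian)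
    {s : Finset (Fin n)} {c : ℝ} (hc : ∀ i ∈ s, c ≤ hH.eigenvalues i)
    {x : Fin n → ℂ} (hx : x ∈ eigSub hH s) :
    c * (∑ i, Complex.normSq (x i)) ≤ (star x ⬝ᵥ (H *ᵥ x)).re := by
  have hq := qform_hermitian hH x
  set y := star (hH.eigenvectorUnitary : Matrix (Fin n) (Fin n) ℂ) *ᵥ x with hy
  have hre : (star x ⬝ᵥ (H *ᵥ x)).re = ∑ i, hH.eigenvalues i * Complex.normSq (y i) := by
    rw [hq, Complex.ofReal_re]
  rw [hre, ← sum_normSq_star_mulVec hH.eigenvectorUnitary x, ← hy, Finset.mul_sum]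
  apply Finset.sum_le_sum
  intro i _
  by_cases hi : i ∈ s
  · exact mul_le_mul_of_nonneg_right (hc i hi) (Complex.normSq_nonneg _)
  · rw [show y i = 0 from eigSub_coord hH hx i hi]
    simp

lemma qform_bound_upper {H : Matrix (Fin n) (Fin n) ℂ} (hH : H.IsHermitian)
    {s : Finset (Fin n)} {c : ℝ} (hc : ∀ i ∈ s, hH.eigenvalues i ≤ c)
    {x : Fin n → ℂ} (hx : x ∈ eigSub hH s) :
    (star x ⬝ᵥ (H *ᵥ x)).re ≤ c * (∑ i, Complex.normSq (x i)) := by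
  have hq := qform_hermitian hH x
  set y := star (hH.eigenvectorUnitary : Matrix (Fin n) (Fin n) ℂ) *ᵥ x with hy
  have hre : (star x ⬝ᵥ (H *ᵥ x)).re = ∑ i, hH.eigenvalues i * Complex.normSq (y i) := by
    rw [hq, Complex.ofReal_re]
  rw [hre, ← sum_normSq_star_mulVec hH.eigenvectorUnitary x, ← hy, Finset.mul_sum]
  apply Finset.sum_le_sum
  intro i _
  by_cases hi : i ∈ s
  · exact mul_le_mul_of_nonneg_right (hc i hi) (Complex.normSq_nonneg _)
  · rw [show y i = 0 from eigSub_coord hH hx i hi]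
    simp

lemma sum_normSq_pos {x : Fin n → ℂ} (hx : x ≠ 0) : 0 < ∑ i, Complex.normSq (x i) := by
  obtain ⟨j, hj⟩ : ∃ j, x j ≠ 0 := by
    by_contra h
    push_neg at h
    exact hx (funext h)
  have : 0 < Complex.normSq (x j) := Complex.normSq_pos.mpr hj
  exact Finset.sum_pos' (fun i _ => Complex.normSq_nonneg _) ⟨j, Finset.mem_univ j, this⟩

/-- the key Courant–Fischer style bound: a `k+1`-dimensional subspace where the quadratic
form is at least `c` forces the `k`-th sorted eigenvalue to be at least `c`. -/
lemma le_eigValsDown_of_subspace {M : Matrix (Fin n) (Fin n) ℂ} (hM : M.IsHermitian)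
    (k : Fin n) (c : ℝ) (S : Submodule ℂ (Fin n → ℂ))
    (hdim : (k : ℕ) + 1 ≤ Module.finrank ℂ S)
    (hS : ∀ x ∈ S, c * (∑ i, Complex.normSq (x i)) ≤ (star x ⬝ᵥ (M *ᵥ x)).re) :
    c ≤ eigValsDown M k := by
  by_contra hlt
  push_neg at hlt
  set φ : Fin n → Fin n := fun j => Tuple.sort hM.eigenvalues j.rev with hφ
  have hφinj : Function.Injective φ := fun a b hab => by
    have := (Tuple.sort hM.eigenvalues).injective hab
    exact Fin.rev_injective this
  set sM : Finset (Fin n) := (Finset.Ici k).image φ with hsM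
  have hcard : sM.card = n - (k : ℕ) := by
    rw [hsM, Finset.card_image_of_injective _ hφinj, Fin.card_Ici]
  have heig : ∀ i ∈ sM, hM.eigenvalues i ≤ eigValsDown M k := by
    intro i hi
    obtain ⟨j, hj, rfl⟩ := Finset.mem_image.mp hi
    have hjk : k ≤ j := Finset.mem_Ici.mp hj
    have h1 : hM.eigenvalues (φ j) = eigValsDown M j := by
      rw [eigValsDown_eq hM]
    rw [h1]
    exact eigValsDown_antitone hM hjk
  set T := eigSub hM sM with hT
  have hrankT : Module.finrank ℂ T = n - (k : ℕ) := by rw [hT, finrank_eigSub, hcard]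
  -- find a common nonzero vector
  have hfin : Module.finrank ℂ (Fin n → ℂ) = n := by
    simp [Module.finrank_pi]
  have hsum := Submodule.finrank_sup_add_finrank_inf_eq S T
  have hSup : Module.finrank ℂ ↥(S ⊔ T) ≤ n := by
    have := Submodule.finrank_le (S ⊔ T)
    omega
  have hinf : 0 < Module.finrank ℂ ↥(S ⊓ T) := by
    have hkn : (k : ℕ) < n := k.isLt
    omega
  have : Nontrivial ↥(S ⊓ T) := Module.nontrivial_of_finrank_pos hinf
  obtain ⟨x, hxne⟩ := exists_ne (0 : ↥(S ⊓ T))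
  have hvne : (x : Fin n → ℂ) ≠ 0 := by
    intro h
    exact hxne (Subtype.ext h)
  have hνpos : 0 < ∑ i, Complex.normSq ((x : Fin n → ℂ) i) := sum_normSq_pos hvne
  have h1 : c * (∑ i, Complex.normSq ((x : Fin n → ℂ) i))
      ≤ (star (x : Fin n → ℂ) ⬝ᵥ (M *ᵥ (x : Fin n → ℂ))).re := hS _ x.2.1
  have h2 : (star (x : Fin n → ℂ) ⬝ᵥ (M *ᵥ (x : Fin n → ℂ))).re
      ≤ eigValsDown M k * (∑ i, Complex.normSq ((x : Fin n → ℂ) i)) :=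
    qform_bound_upper hM heig x.2.2
  have h3 : eigValsDown M k * (∑ i, Complex.normSq ((x : Fin n → ℂ) i))
      < c * (∑ i, Complex.normSq ((x : Fin n → ℂ) i)) :=
    mul_lt_mul_of_pos_right hlt hνpos
  linarith


lemma dot_self_normSq (x : Fin n → ℂ) :
    star x ⬝ᵥ x = ((∑ i, Complex.normSq (x i) : ℝ) : ℂ) := by
  rw [dotProduct]
  push_cast
  congr 1
  funext i
  rw [Pi.star_apply, Complex.normSq_eq_conj_mul_self, Complex.star_def]

lemma sum_normSq_single (i : Fin n) :
    ∑ j, Complex.normSq ((Pi.single i 1 : Fin n → ℂ) j) = 1 := by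
  rw [Finset.sum_eq_single i]
  · simp
  · intro j _ hj
    simp [Pi.single_apply, hj]
  · simp

lemma qform_smul_re (M : Matrix (Fin n) (Fin n) ℂ) (x : Fin n → ℂ) (r : ℝ) :
    (star (((r : ℂ)) • x) ⬝ᵥ (M *ᵥ ((r : ℂ) • x))).re = r ^ 2 * (star x ⬝ᵥ (M *ᵥ x)).re := by
  have h : star ((r : ℂ) • x) ⬝ᵥ (M *ᵥ ((r : ℂ) • x))
      = ((r ^ 2 : ℝ) : ℂ) * (star x ⬝ᵥ (M *ᵥ x)) := by
    rw [Matrix.mulVec_smul, star_smul, smul_dotProduct, dotProduct_smul,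
      smul_eq_mul, smul_eq_mul, Complex.star_def, Complex.conj_ofReal]
    push_cast
    ring
  rw [h, Complex.mul_re, Complex.ofReal_re, Complex.ofReal_im, zero_mul, sub_zero]

lemma qform_sub_re (M N : Matrix (Fin n) (Fin n) ℂ) (x : Fin n → ℂ) :
    (star x ⬝ᵥ ((M - N) *ᵥ x)).re = (star x ⬝ᵥ (M *ᵥ x)).re - (star x ⬝ᵥ (N *ᵥ x)).re := by
  rw [Matrix.sub_mulVec, dotProduct_sub, Complex.sub_re]

lemma scalar_lin {f : ℝ → ℝ} (hconv : ConvexOn ℝ (Set.Ici 0) f) (hf0 : f 0 = 0)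
    {κ b' : ℝ} (h0 : 0 ≤ κ) (hκ : κ ≤ b') (hb' : 0 < b') :
    f κ ≤ (f b' / b') * κ := by
  rcases eq_or_lt_of_le h0 with h | h
  · rw [← h, hf0, mul_zero]
  · have hs := hconv.secant_mono (a := 0) (x := κ) (y := b')
      (Set.self_mem_Ici) (Set.mem_Ici.mpr h0) (Set.mem_Ici.mpr (le_trans h0 hκ))
      (ne_of_gt h) (ne_of_gt hb') hκ
    rw [hf0, sub_zero, sub_zero, sub_zero, sub_zero] at hs
    rw [div_le_div_iff₀ h hb'] at hs
    calc f κ = f κ * b' / b' := by field_simp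
      _ ≤ f b' * κ / b' := by
          apply div_le_div_of_nonneg_right ?_ hb'.le
          linarith
      _ = (f b' / b') * κ := by ring

lemma scalar_key {f : ℝ → ℝ} (hconv : ConvexOn ℝ (Set.Ici 0) f) (hf0 : f 0 = 0)
    {a β b' : ℝ} (h0β : 0 ≤ β) (hβb : β ≤ b') (hba : b' ≤ a) (hb' : 0 < b') :
    f (a - β) + (f b' / b') * β ≤ f a := by
  rcases eq_or_lt_of_le h0β with h | hβ
  · rw [← h, sub_zero, mul_zero, add_zero]
  · have hapos : 0 < a := lt_of_lt_of_le hb' hba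
    have haβ : 0 ≤ a - β := by linarith
    have s1 := hconv.secant_mono (a := 0) (x := b') (y := a)
      Set.self_mem_Ici (Set.mem_Ici.mpr hb'.le) (Set.mem_Ici.mpr hapos.le)
      (ne_of_gt hb') (ne_of_gt hapos) hba
    rw [hf0, sub_zero, sub_zero, sub_zero, sub_zero] at s1
    have s2 := hconv.secant_mono (a := a) (x := 0) (y := a - β)
      (Set.mem_Ici.mpr hapos.le) Set.self_mem_Ici (Set.mem_Ici.mpr haβ)
      (ne_of_lt hapos) (by intro hcon; rw [sub_eq_self] at hcon; exact (ne_of_gt hβ) hcon)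
      (by linarith)
    rw [hf0] at s2
    have e1 : (0 - f a) / (0 - a) = f a / a := by
      rw [zero_sub, zero_sub, neg_div_neg_eq]
    have e2 : (f (a - β) - f a) / (a - β - a) = (f a - f (a - β)) / β := by
      rw [show a - β - a = -β by ring, div_neg, ← neg_div, neg_sub]
    rw [e1, e2] at s2
    have s3 : f b' / b' ≤ (f a - f (a - β)) / β := le_trans s1 s2
    rw [le_div_iff₀ hβ] at s3
    linarith

lemma eig_le_opNorm {B : Matrix (Fin n) (Fin n) ℂ} (hB : B.PosSemidef) (i : Fin n) :
    hB.1.eigenvalues i ≤ opNorm B := by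
  set v := hB.1.eigenvectorBasis i with hv
  have hnorm : ‖v‖ = 1 := hB.1.eigenvectorBasis.orthonormal.1 i
  have hBv : Matrix.toEuclideanCLM (𝕜 := ℂ) B v = hB.1.eigenvalues i • v := by
    apply (WithLp.equiv 2 (Fin n → ℂ)).injective
    show B *ᵥ WithLp.ofLp v = WithLp.ofLp (hB.1.eigenvalues i • v)
    rw [WithLp.ofLp_smul]
    exact hB.1.mulVec_eigenvectorBasis i
  have h1 : ‖Matrix.toEuclideanCLM (𝕜 := ℂ) B v‖ ≤ opNorm B * ‖v‖ :=
    (Matrix.toEuclideanCLM (𝕜 := ℂ) B).le_opNorm v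
  rw [hBv, norm_smul, hnorm, mul_one, mul_one, Real.norm_eq_abs,
    abs_of_nonneg (hB.eigenvalues_nonneg i)] at h1
  exact h1

lemma jensen_qform {A : Matrix (Fin n) (Fin n) ℂ} (hA : A.PosSemidef) {f : ℝ → ℝ}
    (hconv : ConvexOn ℝ (Set.Ici 0) f) {x : Fin n → ℂ}
    (hx : ∑ i, Complex.normSq (x i) = 1) :
    f ((star x ⬝ᵥ (A *ᵥ x)).re) ≤ (star x ⬝ᵥ (matFun f A *ᵥ x)).re := by
  set y := star (hA.1.eigenvectorUnitary : Matrix (Fin n) (Fin n) ℂ) *ᵥ x with hy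
  have hsum : ∑ i, Complex.normSq (y i) = 1 := by
    rw [hy, sum_normSq_star_mulVec hA.1.eigenvectorUnitary x, hx]
  have h1 : (star x ⬝ᵥ (A *ᵥ x)).re = ∑ i, Complex.normSq (y i) * hA.1.eigenvalues i := by
    rw [qform_hermitian hA.1 x, Complex.ofReal_re, ← hy]
    exact Finset.sum_congr rfl (fun i _ => mul_comm _ _)
  have h2 : (star x ⬝ᵥ (matFun f A *ᵥ x)).re
      = ∑ i, Complex.normSq (y i) * f (hA.1.eigenvalues i) := by
    rw [qform_matFun hA.1 f x, Complex.ofReal_re, ← hy]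
    exact Finset.sum_congr rfl (fun i _ => mul_comm _ _)
  have := hconv.map_sum_le (t := Finset.univ) (w := fun i => Complex.normSq (y i))
    (p := fun i => hA.1.eigenvalues i) (fun i _ => Complex.normSq_nonneg _) hsum
    (fun i _ => Set.mem_Ici.mpr (hA.eigenvalues_nonneg i))
  rw [h1, h2]
  simpa [smul_eq_mul] using this

lemma eigValsDown_matFun_eq {C : Matrix (Fin n) (Fin n) ℂ} (hC : C.IsHermitian)
    (hpos : ∀ i, 0 ≤ hC.eigenvalues i) {f : ℝ → ℝ} (hf : MonotoneOn f (Set.Ici 0)) :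
    eigValsDown (matFun f C) = fun k => f (eigValsDown C k) := by
  have hM := matFun_isHermitian hC f
  have hvalnn : ∀ j, 0 ≤ eigValsDown C j := by
    intro j
    rw [eigValsDown_eq hC]
    exact hpos _
  apply antitone_unique (eigValsDown_antitone hM)
  · intro i j hij
    exact hf (Set.mem_Ici.mpr (hvalnn j)) (Set.mem_Ici.mpr (hvalnn i))
      (eigValsDown_antitone hC hij)
  · calc Finset.univ.val.map (eigValsDown (matFun f C))
        = Finset.univ.val.map hM.eigenvalues := eigValsDown_multiset hM
      _ = Finset.univ.val.map (fun i => f (hC.eigenvalues i)) :=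
          (eig_multiset_of_conj hM hC.eigenvectorUnitary (fun i => f (hC.eigenvalues i))
            (matFun_eq hC f)).symm
      _ = (Finset.univ.val.map hC.eigenvalues).map f := by rw [Multiset.map_map]; rfl
      _ = (Finset.univ.val.map (eigValsDown C)).map f := by rw [eigValsDown_multiset hC]
      _ = Finset.univ.val.map (fun k => f (eigValsDown C k)) := by rw [Multiset.map_map]; rfl

end AuxStmt1

/-- Corollary `prop:gg`: for PSD `A, B` with `A ≥ ‖B‖·I` and a
non-negative, strictly increasing, convex `f` on `[0,∞)` with `f(0) = 0` mapping `[0,∞)`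
onto `[0,∞)`, each sorted eigenvalue of `f(A - B)` is at most the corresponding sorted
eigenvalue of `f(A) - f(B)`. -/
theorem stmt1 {n : ℕ} (A B : Matrix (Fin n) (Fin n) ℂ)
    (hA : A.PosSemidef) (hB : B.PosSemidef)
    (hAB : (A - opNorm B • (1 : Matrix (Fin n) (Fin n) ℂ)).PosSemidef)
    (f : ℝ → ℝ) (hf_nonneg : ∀ x ∈ Set.Ici (0 : ℝ), 0 ≤ f x)
    (hf_mono : StrictMonoOn f (Set.Ici (0 : ℝ)))
    (hf_conv : ConvexOn ℝ (Set.Ici (0 : ℝ)) f)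
    (hf0 : f 0 = 0)
    (hf_surj : Set.SurjOn f (Set.Ici (0 : ℝ)) (Set.Ici (0 : ℝ)))
    (k : Fin n) :
    eigValsDown (matFun f (A - B)) k ≤ eigValsDown (matFun f A - matFun f B) k := by
  classical
  have hbnn : (0:ℝ) ≤ opNorm B := norm_nonneg _
  have hC : (A - B).IsHermitian := hA.1.sub hB.1
  have hκb : ∀ i, hB.1.eigenvalues i ≤ opNorm B := eig_le_opNorm hB
  have hκ0 : ∀ i, 0 ≤ hB.1.eigenvalues i := hB.eigenvalues_nonneg
  have hqB_le : ∀ x : Fin n → ℂ,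
      (star x ⬝ᵥ (B *ᵥ x)).re ≤ opNorm B * ∑ i, Complex.normSq (x i) := by
    intro x
    have h1 : (star x ⬝ᵥ (B *ᵥ x)).re = ∑ i, hB.1.eigenvalues i *
        Complex.normSq ((star (hB.1.eigenvectorUnitary : Matrix (Fin n) (Fin n) ℂ) *ᵥ x) i) := by
      rw [qform_hermitian hB.1 x, Complex.ofReal_re]
    rw [h1, ← sum_normSq_star_mulVec hB.1.eigenvectorUnitary x, Finset.mul_sum]
    exact Finset.sum_le_sum fun i _ =>
      mul_le_mul_of_nonneg_right (hκb i) (Complex.normSq_nonneg _)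
  have hqB_ge : ∀ x : Fin n → ℂ, 0 ≤ (star x ⬝ᵥ (B *ᵥ x)).re := by
    intro x
    have := hB.re_dotProduct_nonneg x
    simpa [RCLike.re_to_complex] using this
  have hqA_ge : ∀ x : Fin n → ℂ,
      opNorm B * ∑ i, Complex.normSq (x i) ≤ (star x ⬝ᵥ (A *ᵥ x)).re := by
    intro x
    have h0 := hAB.re_dotProduct_nonneg x
    rw [RCLike.re_to_complex] at h0
    have hexp : (star x ⬝ᵥ ((A - opNorm B • (1 : Matrix (Fin n) (Fin n) ℂ)) *ᵥ x)).re
        = (star x ⬝ᵥ (A *ᵥ x)).re - opNorm B * ∑ i, Complex.normSq (x i) := by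
      rw [qform_sub_re]
      congr 1
      rw [Matrix.smul_mulVec, Matrix.one_mulVec, dotProduct_smul,
        dot_self_normSq, Complex.real_smul, ← Complex.ofReal_mul, Complex.ofReal_re]
    rw [hexp] at h0
    linarith
  obtain ⟨s', hs', hkey⟩ : ∃ s' : ℝ,
      (∀ κ, 0 ≤ κ → κ ≤ opNorm B → f κ ≤ s' * κ) ∧
      (∀ a' β, 0 ≤ β → β ≤ opNorm B → opNorm B ≤ a' → f (a' - β) + s' * β ≤ f a') := by
    rcases eq_or_lt_of_le hbnn with hb0 | hbpos
    · refine ⟨0, ?_, ?_⟩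
      · intro κ h0 hκ
        have hκ0' : κ = 0 := le_antisymm (hκ.trans hb0.symm.le) h0
        rw [hκ0', hf0, zero_mul]
      · intro a' β h0 hβb hba
        have hβ0' : β = 0 := le_antisymm (hβb.trans hb0.symm.le) h0
        rw [hβ0', sub_zero, zero_mul, add_zero]
    · exact ⟨f (opNorm B) / opNorm B,
        fun κ h0 hκ => scalar_lin hf_conv hf0 h0 hκ hbpos,
        fun a' β h0 hβb hba => scalar_key hf_conv hf0 h0 hβb hba hbpos⟩
  have hqfB_le : ∀ x : Fin n → ℂ,
      (star x ⬝ᵥ (matFun f B *ᵥ x)).re ≤ s' * (star x ⬝ᵥ (B *ᵥ x)).re := by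
    intro x
    rw [qform_matFun hB.1 f x, Complex.ofReal_re, qform_hermitian hB.1 x, Complex.ofReal_re,
      Finset.mul_sum]
    apply Finset.sum_le_sum
    intro i _
    have h1 := hs' _ (hκ0 i) (hκb i)
    calc f (hB.1.eigenvalues i) * Complex.normSq _
        ≤ (s' * hB.1.eigenvalues i) * Complex.normSq _ :=
          mul_le_mul_of_nonneg_right h1 (Complex.normSq_nonneg _)
      _ = s' * (hB.1.eigenvalues i * Complex.normSq _) := by ring
  have hCpos : ∀ i, 0 ≤ hC.eigenvalues i := by
    intro i
    set x : Fin n → ℂ :=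
      (hC.eigenvectorUnitary : Matrix (Fin n) (Fin n) ℂ) *ᵥ Pi.single i 1 with hx
    have hν1 : ∑ j, Complex.normSq (x j) = 1 := by
      rw [hx, sum_normSq_mulVec, sum_normSq_single]
    have hxeig : (A - B) *ᵥ x = hC.eigenvalues i • x := by
      rw [hx, hC.eigenvectorUnitary_mulVec]
      exact hC.mulVec_eigenvectorBasis i
    have hq : (star x ⬝ᵥ ((A - B) *ᵥ x)).re = hC.eigenvalues i := by
      rw [hxeig, dotProduct_smul, dot_self_normSq, hν1]
      simp [Complex.real_smul]
    have hlow : 0 ≤ (star x ⬝ᵥ ((A - B) *ᵥ x)).re := by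
      rw [qform_sub_re]
      have h2 := hqA_ge x
      have h3 := hqB_le x
      rw [hν1] at h2 h3
      linarith
    rw [hq] at hlow
    exact hlow
  have hmonoOn : MonotoneOn f (Set.Ici 0) := hf_mono.monotoneOn
  have hstepA : eigValsDown (matFun f (A - B)) k = f (eigValsDown (A - B) k) :=
    congrFun (eigValsDown_matFun_eq hC hCpos hmonoOn) k
  set φ : Fin n → Fin n := fun j => Tuple.sort hC.eigenvalues j.rev with hφ
  have hφinj : Function.Injective φ := fun a' b' hab =>
    Fin.rev_injective ((Tuple.sort hC.eigenvalues).injective hab)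
  set sC : Finset (Fin n) := (Finset.Iic k).image φ with hsC
  have hcard : sC.card = (k:ℕ) + 1 := by
    rw [hsC, Finset.card_image_of_injective _ hφinj, Fin.card_Iic]
  have hgeS : ∀ i ∈ sC, eigValsDown (A - B) k ≤ hC.eigenvalues i := by
    intro i hi
    obtain ⟨j, hj, rfl⟩ := Finset.mem_image.mp hi
    have h4 : hC.eigenvalues (φ j) = eigValsDown (A - B) j := by rw [eigValsDown_eq hC]
    rw [h4]
    exact eigValsDown_antitone hC (Finset.mem_Iic.mp hj)
  set S := eigSub hC sC with hSdef
  have hdim : (k:ℕ) + 1 ≤ Module.finrank ℂ S := by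
    rw [hSdef, finrank_eigSub, hcard]
  rw [hstepA]
  apply le_eigValsDown_of_subspace
    ((matFun_isHermitian hA.1 f).sub (matFun_isHermitian hB.1 f)) k _ S hdim
  intro x hxS
  rcases eq_or_ne x 0 with rfl | hxne
  · simp
  · set ν := ∑ i, Complex.normSq (x i) with hν
    have hνpos : 0 < ν := sum_normSq_pos hxne
    set r : ℝ := (Real.sqrt ν)⁻¹ with hr
    have hr2 : r ^ 2 = ν⁻¹ := by
      rw [hr, inv_pow, Real.sq_sqrt hνpos.le]
    set u : Fin n → ℂ := ((r : ℂ)) • x with hu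
    have huS : u ∈ S := Submodule.smul_mem _ _ hxS
    have hνu : ∑ i, Complex.normSq (u i) = 1 := by
      rw [hu]
      have hterm : ∀ i, Complex.normSq (((r:ℂ) • x) i) = r^2 * Complex.normSq (x i) := by
        intro i
        rw [Pi.smul_apply, smul_eq_mul, Complex.normSq_mul, Complex.normSq_ofReal]
        ring
      rw [Finset.sum_congr rfl (fun i _ => hterm i), ← Finset.mul_sum, hr2, ← hν,
        inv_mul_cancel₀ (ne_of_gt hνpos)]
    have hre_smul : ∀ M' : Matrix (Fin n) (Fin n) ℂ,
        (star u ⬝ᵥ (M' *ᵥ u)).re = ν⁻¹ * (star x ⬝ᵥ (M' *ᵥ x)).re := by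
      intro M'
      rw [hu, qform_smul_re, hr2]
    set α := (star u ⬝ᵥ (A *ᵥ u)).re with hα
    set β := (star u ⬝ᵥ (B *ᵥ u)).re with hβ
    have hbα : opNorm B ≤ α := by
      have h5 := hqA_ge u
      rw [hνu, mul_one] at h5
      exact h5
    have hβ0 : 0 ≤ β := hqB_ge u
    have hβb : β ≤ opNorm B := by
      have h6 := hqB_le u
      rw [hνu, mul_one] at h6
      exact h6
    have hJen : f α ≤ (star u ⬝ᵥ (matFun f A *ᵥ u)).re := jensen_qform hA hf_conv hνu
    have hfBu : (star u ⬝ᵥ (matFun f B *ᵥ u)).re ≤ s' * β := hqfB_le u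
    have hCu : eigValsDown (A - B) k ≤ α - β := by
      have h1 := qform_bound_lower hC hgeS huS
      rw [hνu, mul_one, qform_sub_re] at h1
      exact h1
    have hμ0 : 0 ≤ eigValsDown (A - B) k := by
      rw [eigValsDown_eq hC]
      exact hCpos _
    have hmono2 : f (eigValsDown (A - B) k) ≤ f (α - β) :=
      hmonoOn (Set.mem_Ici.mpr hμ0) (Set.mem_Ici.mpr (le_trans hμ0 hCu)) hCu
    have hkey2 : f (α - β) + s' * β ≤ f α := hkey α β hβ0 hβb hbα
    have hMu : (star u ⬝ᵥ ((matFun f A - matFun f B) *ᵥ u)).re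
        = (star u ⬝ᵥ (matFun f A *ᵥ u)).re - (star u ⬝ᵥ (matFun f B *ᵥ u)).re :=
      qform_sub_re _ _ u
    have hunit : f (eigValsDown (A - B) k)
        ≤ (star u ⬝ᵥ ((matFun f A - matFun f B) *ᵥ u)).re := by
      rw [hMu]
      linarith
    rw [hre_smul (matFun f A - matFun f B)] at hunit
    calc f (eigValsDown (A - B) k) * ν
        ≤ (ν⁻¹ * (star x ⬝ᵥ ((matFun f A - matFun f B) *ᵥ x)).re) * ν :=
          mul_le_mul_of_nonneg_right hunit hνpos.le
      _ = (star x ⬝ᵥ ((matFun f A - matFun f B) *ᵥ x)).re := by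
          field_simp
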